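/- Let X be a compact metric space and T : X → X a continuous map. If (x_1, …, x_n) is an IN-tuple for T, then each coordinate x_i is a nonwandering point of T. -/
import Mathlib


open scoped ENNReal

/-- A finite set `J` of nonnegative integers is an independence set (of times) for the
tuple of sets `A` and the map `T`. -/
def IsIndepTimeSet {X : Type*} (T : X → X) {k : ℕ} (A : Fin k → Set X) (J : Finset ℕ) : Prop :=
  ∀ s : ℕ → Fin k, ∃ x : X, ∀ i ∈ J, T^[i] x ∈ A (s i)

/-- `x` is an IN-tuple for `T`: every tuple of open neighbourhoods of its coordinates has
independence sets of arbitrarily large finite cardinality. -/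
def IsINTuple {X : Type*} [TopologicalSpace X] (T : X → X) {k : ℕ} (x : Fin k → X) : Prop :=
  ∀ U : Fin k → Set X, (∀ j, IsOpen (U j)) → (∀ j, x j ∈ U j) →
    ∀ p : ℕ, ∃ J : Finset ℕ, p ≤ J.card ∧ IsIndepTimeSet T U J

/-- `x` is a nonwandering point of `T`. -/
def NonwanderingPt {X : Type*} [TopologicalSpace X] (T : X → X) (x : X) : Prop :=
  ∀ U : Set X, IsOpen U → x ∈ U → ∃ n : ℕ, 1 ≤ n ∧ (T^[n] '' U ∩ U).Nonempty

/-- Every coordinate of an IN-tuple is a nonwandering point. -/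
theorem statement6 {X : Type*} [MetricSpace X] [CompactSpace X]
    (T : X → X) (hT : Continuous T) {n : ℕ} (x : Fin n → X) (h : IsINTuple T x) :
    ∀ i, NonwanderingPt T (x i) := by
  intro i U hU hxU
  set V : Fin n → Set X := fun j => if j = i then U else Set.univ with hV
  obtain ⟨J, hcard, hind⟩ := h V
    (fun j => by by_cases hj : j = i <;> simp [hV, hj, hU])
    (fun j => by by_cases hj : j = i <;> simp [hV, hj, hxU]) 2
  -- pick two distinct elements of J
  have h2 : 1 < J.card := hcard
  obtain ⟨a, ha, b, hb, hab⟩ := Finset.one_lt_card.mp h2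
  obtain ⟨y, hy⟩ := hind (fun _ => i)
  have hya : T^[a] y ∈ U := by have := hy a ha; simpa [hV] using this
  have hyb : T^[b] y ∈ U := by have := hy b hb; simpa [hV] using this
  rcases lt_or_gt_of_ne hab with hlt | hlt
  · refine ⟨b - a, by omega, T^[b] y, ⟨T^[a] y, hya, ?_⟩, hyb⟩
    rw [← Function.iterate_add_apply]
    congr 1; omega
  · refine ⟨a - b, by omega, T^[a] y, ⟨T^[b] y, hyb, ?_⟩, hya⟩
    rw [← Function.iterate_add_apply]
    congr 1; omega
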